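/- Let G be a finite simple graph and let e be an edge of G. Then the Grundy domination number of the graph G - e obtained by deleting the edge e satisfies γ_gr(G - e) ≥ γ_gr(G) - 1. -/

import Mathlib

/-- The closed neighborhood `N[v] = {v} ∪ N(v)` of a vertex. -/
def closedNbhd {V : Type*} (G : SimpleGraph V) (v : V) : Set V :=
  insert v (G.neighborSet v)

/-- A sequence (list) of pairwise distinct vertices is legal if each vertex
footprints some vertex not dominated by the previous ones. -/
def IsLegalSeq {V : Type*} (G : SimpleGraph V) (l : List V) : Prop :=
  l.Nodup ∧ ∀ i : Fin l.length, ∃ u,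
    u ∈ closedNbhd G (l.get i) ∧
    ∀ j : Fin l.length, (j : ℕ) < (i : ℕ) → u ∉ closedNbhd G (l.get j)

/-- A legal dominating sequence. -/
def IsDomSeq {V : Type*} (G : SimpleGraph V) (l : List V) : Prop :=
  IsLegalSeq G l ∧ ∀ u : V, ∃ v ∈ l, u ∈ closedNbhd G v

/-- The Grundy domination number: the maximum length of a legal dominating sequence. -/
noncomputable def grundyDomNum {V : Type*} (G : SimpleGraph V) : ℕ :=
  sSup {k : ℕ | ∃ l : List V, IsDomSeq G l ∧ l.length = k}

section Aux

variable {V : Type*}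

lemma mem_closedNbhd {G : SimpleGraph V} {v u : V} :
    u ∈ closedNbhd G v ↔ u = v ∨ G.Adj v u := by
  simp [closedNbhd]

lemma self_mem_closedNbhd (G : SimpleGraph V) (v : V) : v ∈ closedNbhd G v :=
  mem_closedNbhd.2 (Or.inl rfl)

lemma isLegalSeq_iff (G : SimpleGraph V) (l : List V) :
    IsLegalSeq G l ↔ l.Nodup ∧ ∀ (i : ℕ) (hi : i < l.length), ∃ u,
      u ∈ closedNbhd G (l[i]'hi) ∧
      ∀ (j : ℕ) (hj : j < i), u ∉ closedNbhd G (l[j]'(hj.trans hi)) := by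
  constructor
  · rintro ⟨hn, h⟩
    refine ⟨hn, fun i hi => ?_⟩
    obtain ⟨u, hu1, hu2⟩ := h ⟨i, hi⟩
    exact ⟨u, hu1, fun j hj => hu2 ⟨j, hj.trans hi⟩ hj⟩
  · rintro ⟨hn, h⟩
    refine ⟨hn, fun i => ?_⟩
    obtain ⟨u, hu1, hu2⟩ := h i i.2
    exact ⟨u, hu1, fun j hj => hu2 j hj⟩

lemma legal_append (G : SimpleGraph V) {l : List V} (hl : IsLegalSeq G l) {u : V}
    (hu : ∀ v ∈ l, u ∉ closedNbhd G v) : IsLegalSeq G (l ++ [u]) := by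
  rw [isLegalSeq_iff] at hl ⊢
  obtain ⟨hn, h⟩ := hl
  have hul : u ∉ l := fun hmem => hu u hmem (self_mem_closedNbhd G u)
  refine ⟨by simp [List.nodup_append, hn, hul]; rintro a ha rfl; exact hul ha, fun i hi => ?_⟩
  rw [List.length_append, List.length_singleton] at hi
  rcases Nat.lt_or_ge i l.length with hil | hil
  · obtain ⟨w, hw1, hw2⟩ := h i hil
    refine ⟨w, ?_, fun j hj => ?_⟩
    · rwa [List.getElem_append_left hil]
    · rw [List.getElem_append_left (hj.trans hil)]
      exact hw2 j hj
  · have hieq : i = l.length := by omega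
    refine ⟨u, ?_, fun j hj => ?_⟩
    · have : (l ++ [u])[i]'(by simp; omega) = u := by
        subst hieq; simp
      rw [this]
      exact self_mem_closedNbhd G u
    · have hjl : j < l.length := by omega
      rw [List.getElem_append_left hjl]
      exact hu _ (List.getElem_mem _)

lemma exists_domSeq_extending [Fintype V] (G : SimpleGraph V) :
    ∀ (n : ℕ) (l : List V), IsLegalSeq G l → Fintype.card V - l.length ≤ n →
      ∃ l', IsDomSeq G l' ∧ l.length ≤ l'.length := by
  classical
  intro n
  induction n with
  | zero =>
    intro l hl hn
    by_cases hdom : ∀ u : V, ∃ v ∈ l, u ∈ closedNbhd G v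
    · exact ⟨l, ⟨hl, hdom⟩, le_rfl⟩
    · push_neg at hdom
      obtain ⟨u, hu⟩ := hdom
      exfalso
      have h1 := (legal_append G hl hu).1.length_le_card
      simp at h1
      omega
  | succ n ih =>
    intro l hl hn
    by_cases hdom : ∀ u : V, ∃ v ∈ l, u ∈ closedNbhd G v
    · exact ⟨l, ⟨hl, hdom⟩, le_rfl⟩
    · push_neg at hdom
      obtain ⟨u, hu⟩ := hdom
      obtain ⟨l', hl', hlen⟩ := ih (l ++ [u]) (legal_append G hl hu) (by simp; omega)
      exact ⟨l', hl', by simp at hlen; omega⟩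

lemma bddAbove_grundySet [Fintype V] (G : SimpleGraph V) :
    BddAbove {k : ℕ | ∃ l : List V, IsDomSeq G l ∧ l.length = k} := by
  classical
  exact ⟨Fintype.card V, fun k ⟨l, hl, hlen⟩ => hlen ▸ hl.1.1.length_le_card⟩

lemma length_le_grundyDomNum [Fintype V] {G : SimpleGraph V} {l : List V}
    (hl : IsLegalSeq G l) : l.length ≤ grundyDomNum G := by
  obtain ⟨l', hl', hlen⟩ := exists_domSeq_extending G (Fintype.card V - l.length) l hl le_rfl
  exact hlen.trans (le_csSup (bddAbove_grundySet G) ⟨l', hl', rfl⟩)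

end Aux

theorem grundy_edge_deletion_lower {V : Type*} [Fintype V] (G : SimpleGraph V)
    (e : Sym2 V) (he : e ∈ G.edgeSet) :
    grundyDomNum G - 1 ≤ grundyDomNum (G.deleteEdges {e}) := by
  classical
  set G' := G.deleteEdges {e} with hG'
  -- closed neighborhoods shrink
  have hsub : ∀ v : V, closedNbhd G' v ⊆ closedNbhd G v := by
    intro v u hu
    rw [mem_closedNbhd] at hu ⊢
    exact hu.imp id fun h => (SimpleGraph.deleteEdges_adj.1 h).1
  induction e with
  | _ x y =>
  have hxy : G.Adj x y := he
  have hne : x ≠ y := hxy.ne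
  have hdiff : ∀ v u : V, u ∈ closedNbhd G v → u ∉ closedNbhd G' v →
      (v = x ∧ u = y) ∨ (v = y ∧ u = x) := by
    intro v u h1 h2
    rw [mem_closedNbhd] at h1 h2
    push_neg at h2
    rcases h1 with h1 | h1
    · exact absurd h1 h2.1
    · have h3 : ¬ G'.Adj v u := h2.2
      rw [hG', SimpleGraph.deleteEdges_adj] at h3
      push_neg at h3
      have := h3 h1
      simp only [Set.mem_singleton_iff, Sym2.eq_iff] at this
      exact this
  -- get a maximum legal dominating sequence for G
  have hne' : {k : ℕ | ∃ l : List V, IsDomSeq G l ∧ l.length = k}.Nonempty := by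
    obtain ⟨l', hl', _⟩ := exists_domSeq_extending G (Fintype.card V) []
      ⟨List.nodup_nil, fun i => absurd i.2 (by simp)⟩ (by simp)
    exact ⟨l'.length, l', hl', rfl⟩
  obtain ⟨S, hS, hSlen⟩ := Nat.sSup_mem hne' (bddAbove_grundySet G)
  rw [show grundyDomNum G = sSup {k : ℕ | ∃ l : List V, IsDomSeq G l ∧ l.length = k} from rfl,
    ← hSlen]
  have hnd := hS.1.1
  have hleg := ((isLegalSeq_iff G S).1 hS.1).2
  -- good indices
  set good : ℕ → Prop := fun i => ∀ hi : i < S.length, ∃ u,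
      u ∈ closedNbhd G' (S[i]'hi) ∧
      ∀ (j : ℕ) (hj : j < i), u ∉ closedNbhd G (S[j]'(hj.trans hi)) with hgood
  -- a bad index has its endpoint in {x,y} and was dominated earlier
  have hbad : ∀ i0 i1, i0 < i1 → (hi1 : i1 < S.length) → ¬ good i0 → ¬ good i1 → False := by
    intro i0 i1 h01 hi1 hb0 hb1
    simp only [hgood, not_forall] at hb0 hb1
    obtain ⟨hi0, hb0⟩ := hb0
    obtain ⟨hi1', hb1⟩ := hb1
    push_neg at hb0 hb1
    -- S[i0] was dominated before i0
    obtain ⟨j0, hj0, hj0mem⟩ := hb0 (S[i0]'hi0) (self_mem_closedNbhd G' _)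
    -- witnesses
    obtain ⟨u0, hu01, hu02⟩ := hleg i0 hi0
    obtain ⟨u1, hu11, hu12⟩ := hleg i1 hi1'
    have hu0' : u0 ∉ closedNbhd G' (S[i0]'hi0) := by
      intro hmem
      obtain ⟨j, hj, hjm⟩ := hb0 u0 hmem
      exact hu02 j hj hjm
    have hu1' : u1 ∉ closedNbhd G' (S[i1]'hi1') := by
      intro hmem
      obtain ⟨j, hj, hjm⟩ := hb1 u1 hmem
      exact hu12 j hj hjm
    have hd0 := hdiff _ _ hu01 hu0'
    have hd1 := hdiff _ _ hu11 hu1'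
    have hSne : S[i0]'hi0 ≠ S[i1]'hi1' := by
      intro h
      have := hnd.getElem_inj_iff.mp h
      omega
    -- in either case u1 = S[i0], contradicting that S[i0] is dominated before i0 < i1
    have hu1eq : u1 = S[i0]'hi0 := by
      rcases hd0 with ⟨h0, _⟩ | ⟨h0, _⟩ <;> rcases hd1 with ⟨h1, h1'⟩ | ⟨h1, h1'⟩ <;>
        first
          | (exfalso; exact hSne (h0.trans h1.symm))
          | (rw [h1', h0])
    exact hu12 j0 (hj0.trans h01) (hu1eq ▸ hj0mem)
  by_cases hall : ∀ i, good i
  · -- S itself is legal in G'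
    have hlegal : IsLegalSeq G' S := by
      rw [isLegalSeq_iff]
      refine ⟨hnd, fun i hi => ?_⟩
      obtain ⟨u, hu1, hu2⟩ := hall i hi
      exact ⟨u, hu1, fun j hj hmem => hu2 j hj (hsub _ hmem)⟩
    exact le_trans (Nat.sub_le _ _) (length_le_grundyDomNum hlegal)
  · push_neg at hall
    obtain ⟨i0, hb0⟩ := hall
    have hi0 : i0 < S.length := by
      by_contra hc
      exact hb0 (fun hi => absurd hi hc)
    set T := S.eraseIdx i0 with hT
    have hTlen : T.length = S.length - 1 := by
      rw [hT, List.length_eraseIdx, if_pos hi0]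
    have hgoodall : ∀ i, i ≠ i0 → good i := by
      intro i hne'
      by_contra hbi
      have hilt : i < S.length := by
        by_contra hc
        exact hbi (fun hi => absurd hi hc)
      rcases lt_or_gt_of_ne hne' with h | h
      · exact hbad i i0 h hi0 hbi hb0
      · exact hbad i0 i h hilt hb0 hbi
    have hlegal : IsLegalSeq G' T := by
      rw [isLegalSeq_iff]
      refine ⟨hnd.sublist (List.eraseIdx_sublist S i0), fun i hi => ?_⟩
      set f : ℕ → ℕ := fun j => if j < i0 then j else j + 1 with hf
      have hfi : ∀ (j : ℕ), j < T.length → f j < S.length := by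
        intro j hj
        rw [hTlen] at hj
        simp only [hf]
        split
        · exact Nat.lt_of_lt_of_le (by assumption) (Nat.le_of_lt hi0)
        · exact Nat.add_lt_of_lt_sub hj
      have hfi0 : ∀ j, f j ≠ i0 := by
        intro j
        simp only [hf]
        split
        · exact Nat.ne_of_lt (by assumption)
        · rename_i h
          exact fun he => h (he ▸ Nat.lt_succ_self j)
      have hfmono : ∀ j k, j < k → f j < f k := by
        intro j k hjk
        simp only [hf]
        split <;> split
        · exact hjk
        · exact Nat.lt_succ_of_lt hjk
        · rename_i h1 h2
          exact absurd (hjk.trans h2) h1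
        · exact Nat.succ_lt_succ hjk
      have hTf : ∀ (j : ℕ) (hj : j < T.length), T[j]'hj = S[f j]'(hfi j hj) := by
        intro j hj
        have hj' : j < (S.eraseIdx i0).length := hj
        have h1 : T[j]'hj = (S.eraseIdx i0)[j]'hj' := rfl
        rw [h1, List.getElem_eraseIdx]
        split <;> rename_i h' <;> simp [hf, h']
      obtain ⟨u, hu1, hu2⟩ := hgoodall (f i) (hfi0 i) (hfi i hi)
      refine ⟨u, by rw [hTf i hi]; exact hu1, fun j hj hmem => ?_⟩
      rw [hTf j (hj.trans hi)] at hmem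
      exact hu2 (f j) (hfmono j i hj) (hsub _ hmem)
    have h := length_le_grundyDomNum hlegal
    rw [hTlen] at h
    exact h
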